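/- In the Norton–Simon model with mutations and a resistance cost, where the resistant growth rate is φ_R(S,R) = ρ_r g(N) R + τ₁ ρ_s g(N) S − τ₂ ρ_r g(N) R with N = S + R, g > 0 decreasing, ρ_s, ρ_r > 0: ∂φ_R/∂S ≤ 0 if and only if (x_r/τ₁)(ρ_r/ρ_s − τ₂ ρ_r/ρ_s − τ₁) + 1 ≥ −g(N)/(N g'(N)), where x_r = R/N. In particular, for the power-law model g(N) = ρ N^{−γ}, substituting x_r = τ₁/(1 − ρ_r/ρ_s) and neglecting terms of order τ₁, τ₂, the condition becomes 1/(1 − ρ_r/ρ_s) ≥ 1/γ, i.e. ρ_r/ρ_s ≥ 1 − γ. -/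

import Mathlib

open Real Set

/-- Norton–Simon model with mutations and a resistance cost: with
`φ_R(S,R) = ρ_r g(N) R + τ₁ ρ_s g(N) S − τ₂ ρ_r g(N) R`, `N = S + R`,
one has `∂φ_R/∂S ≤ 0` iff
`(x_r/τ₁)(ρ_r/ρ_s − τ₂ ρ_r/ρ_s − τ₁) + 1 ≥ −g(N)/(N g'(N))` with
`x_r = R/N`. In particular, for the power-law model `g(N) = ρ N^(−γ)`,
substituting `x_r = τ₁/(1 − ρ_r/ρ_s)` (and neglecting terms of order
`τ₁, τ₂`), the condition `1/(1 − ρ_r/ρ_s) ≥ 1/γ` is equivalent to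
`ρ_r/ρ_s ≥ 1 − γ`. -/
theorem resistance_cost_condition
    (g : ℝ → ℝ) (τ₁ τ₂ ρs ρr S R : ℝ)
    (hτ₁ : 0 < τ₁) (hτ₂ : 0 < τ₂) (hρs : 0 < ρs) (hρr : 0 < ρr)
    (hS : 0 < S) (hR : 0 < R)
    (hg : DifferentiableAt ℝ g (S + R))
    (hgpos : 0 < g (S + R)) (hg' : deriv g (S + R) < 0) :
    (deriv (fun s => ρr * (g (s + R) * R) + τ₁ * (ρs * (g (s + R) * s)) -
        τ₂ * (ρr * (g (s + R) * R))) S ≤ 0 ↔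
      (R / (S + R)) / τ₁ * (ρr / ρs - τ₂ * (ρr / ρs) - τ₁) + 1 ≥
        -g (S + R) / ((S + R) * deriv g (S + R))) ∧
    (∀ γ : ℝ, 0 < γ → γ < 1 → ρr / ρs < 1 →
      (1 / (1 - ρr / ρs) ≥ 1 / γ ↔ ρr / ρs ≥ 1 - γ)) := by
  set N := S + R with hN
  set G := g N with hG
  set G' := deriv g N with hG'
  have hNpos : 0 < N := by positivity
  constructor
  · -- compute the derivative
    have hinner : HasDerivAt (fun s : ℝ => g (s + R)) G' S := by
      have h1 : HasDerivAt (fun s : ℝ => s + R) 1 S := (hasDerivAt_id S).add_const R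
      have := (hg.hasDerivAt.comp S h1)
      rw [mul_one] at this
      exact this
    have hφ : HasDerivAt (fun s => ρr * (g (s + R) * R) + τ₁ * (ρs * (g (s + R) * s)) -
        τ₂ * (ρr * (g (s + R) * R)))
        (ρr * (G' * R) + τ₁ * (ρs * (G' * S + G * 1)) - τ₂ * (ρr * (G' * R))) S := by
      exact (((hinner.mul_const R).const_mul ρr).add
        (((hinner.mul (hasDerivAt_id S)).const_mul ρs).const_mul τ₁)).sub
        (((hinner.mul_const R).const_mul ρr).const_mul τ₂)
    rw [hφ.deriv]
    -- key polynomial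
    have hNG' : N * G' < 0 := mul_neg_of_pos_of_neg hNpos hg'
    have key : (R / N) / τ₁ * (ρr / ρs - τ₂ * (ρr / ρs) - τ₁) + 1 ≥ -G / (N * G') ↔
        ((R / N) / τ₁ * (ρr / ρs - τ₂ * (ρr / ρs) - τ₁) + 1) * (N * G') ≤ -G := by
      rw [ge_iff_le, div_le_iff_of_neg hNG']
    rw [key]
    have heq : ((R / N) / τ₁ * (ρr / ρs - τ₂ * (ρr / ρs) - τ₁) + 1) * (N * G') + G =
        (ρr * (G' * R) + τ₁ * (ρs * (G' * S + G * 1)) - τ₂ * (ρr * (G' * R))) / (τ₁ * ρs) := by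
      field_simp
      ring
    constructor
    · intro h
      have : ((R / N) / τ₁ * (ρr / ρs - τ₂ * (ρr / ρs) - τ₁) + 1) * (N * G') + G ≤ 0 := by
        rw [heq]
        exact div_nonpos_of_nonpos_of_nonneg h (by positivity)
      linarith
    · intro h
      have h2 : ((R / N) / τ₁ * (ρr / ρs - τ₂ * (ρr / ρs) - τ₁) + 1) * (N * G') + G ≤ 0 := by
        linarith
      rw [heq] at h2
      have := (div_nonpos_iff.mp h2)
      rcases this with ⟨h3, h4⟩ | ⟨h3, _⟩
      · nlinarith
      · exact h3
  · intro γ hγ hγ1 hρ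
    have h1 : 0 < 1 - ρr / ρs := by linarith
    rw [ge_iff_le, div_le_div_iff₀ hγ h1, ge_iff_le]
    constructor <;> intro h <;> linarith
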